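/- Let G=(V0,V1,E) be a connectivity game with derivative sequence (G_k)_{k≥0}. For every k≥0, every strongly connected component of G_k is a forced trap in G_k (with respect to the edge relation E_k). -/

import Mathlib

namespace Games

universe u

variable {V : Type u}

/-- A connectivity game: player 0's positions `V0`, player 1's positions `V1`,
and the edge set `E`. -/
structure ConnGame (V : Type u) where
  V0 : Set V
  V1 : Set V
  E : Set (V × V)

namespace ConnGame

/-- The vertex set `V = V0 ∪ V1`. -/
def verts (G : ConnGame V) : Set V := G.V0 ∪ G.V1

/-- The sub-game of `G` played on the vertex set `X` (edges restricted to `X`). -/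
def restrict (G : ConnGame V) (X : Set V) : ConnGame V :=
  ⟨G.V0 ∩ X, G.V1 ∩ X, {e | e ∈ G.E ∧ e.1 ∈ X ∧ e.2 ∈ X}⟩

end ConnGame

/-- Reachability by a directed path in the digraph with edge set `E`. -/
def Reach (E : Set (V × V)) : V → V → Prop :=
  Relation.ReflTransGen fun x y => (x, y) ∈ E

/-- Reachability by a directed path staying inside `X`. -/
def ReachWithin (E : Set (V × V)) (X : Set V) : V → V → Prop :=
  Relation.ReflTransGen fun x y => (x, y) ∈ E ∧ x ∈ X ∧ y ∈ X

/-- The set of strongly connected components of the digraph with vertex set `W`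
and edge set `E`. -/
def SCCs (W : Set V) (E : Set (V × V)) : Set (Set V) :=
  {S | ∃ v ∈ W, S = {u | u ∈ W ∧ Reach E v u ∧ Reach E u v}}

/-- The digraph with vertex set `W` and edge set `E` is strongly connected. -/
def StronglyConnected (W : Set V) (E : Set (V × V)) : Prop :=
  ∀ a ∈ W, ∀ b ∈ W, Reach E a b

/-- `E⁻¹(S)`: the set of predecessors of `S`. -/
def preds (E : Set (V × V)) (S : Set V) : Set V := {u | ∃ s ∈ S, (u, s) ∈ E}

/-- `Force(U, S) = {v ∈ (E⁻¹(S) \ S) ∩ U : E(v) ⊆ S}`. -/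
def Force (E : Set (V × V)) (U S : Set V) : Set V :=
  {v | v ∈ (preds E S \ S) ∩ U ∧ ∀ u, (v, u) ∈ E → u ∈ S}

/-- `X` is a forced trap (FT) w.r.t. player 1's positions `V1` and edge set `E`:
either `X` is a singleton, or `|X| > 1`, `E(X ∩ V1) ⊆ X` and any two vertices of `X`
are strongly connected within `X`. -/
def IsFT (V1 : Set V) (E : Set (V × V)) (X : Set V) : Prop :=
  (∃ v, X = {v}) ∨
    (X.Nontrivial ∧ (∀ v ∈ X ∩ V1, ∀ u, (v, u) ∈ E → u ∈ X) ∧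
      ∀ a ∈ X, ∀ b ∈ X, ReachWithin E X a b)

/-- The derivative sequence of `G`: `deriv G k = (E_k, U_k, F_k)`. -/
def deriv (G : ConnGame V) : ℕ → Set (V × V) × Set V × Set V
  | 0 => ({e | e ∈ G.E ∧ e.1 ∈ G.V0}, G.V1, ∅)
  | k + 1 =>
    let p := deriv G k
    let F : Set V := ⋃ S ∈ SCCs G.verts p.1, Force G.E p.2.1 S
    (p.1 ∪ {e | e ∈ G.E ∧ e.1 ∈ F}, p.2.1 \ F, F)

/-- The edge set `E_k` of the `k`-th derivative `G_k`. -/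
def Ek (G : ConnGame V) (k : ℕ) : Set (V × V) := (deriv G k).1

/-- The set `U_k`. -/
def Uk (G : ConnGame V) (k : ℕ) : Set V := (deriv G k).2.1

/-- The set `F_k`. -/
def Fk (G : ConnGame V) (k : ℕ) : Set V := (deriv G k).2.2

/-- The stabilization point: the minimal `k > 0` with `F_k = ∅`. -/
noncomputable def stab (G : ConnGame V) : ℕ := sInf {k | 0 < k ∧ Fk G k = ∅}

/-- Finite plays (histories) consistent with the player-0 strategy `s`, starting
at `v0`: at a player-0 position the strategy's (legal) move is played, at a
player-1 position any legal move may be played. -/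
inductive Hist (G : ConnGame V) (s : List V → V) (v0 : V) : List V → Prop
  | base : Hist G s v0 [v0]
  | move0 (h : List V) (v : V) (hh : Hist G s v0 (h ++ [v])) (hv : v ∈ G.V0)
      (he : (v, s (h ++ [v])) ∈ G.E) : Hist G s v0 ((h ++ [v]) ++ [s (h ++ [v])])
  | move1 (h : List V) (v u : V) (hh : Hist G s v0 (h ++ [v])) (hv : v ∈ G.V1)
      (he : (v, u) ∈ G.E) : Hist G s v0 ((h ++ [v]) ++ [u])

/-- The prefix `ρ 0, …, ρ n` of an infinite sequence. -/
def prefixUpTo (ρ : ℕ → V) (n : ℕ) : List V := List.ofFn fun i : Fin (n + 1) => ρ i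

/-- `ρ` is an infinite play consistent with strategy `s` from `v0`. -/
def InfPlay (G : ConnGame V) (s : List V → V) (v0 : V) (ρ : ℕ → V) : Prop :=
  ∀ n, Hist G s v0 (prefixUpTo ρ n)

/-- The set of vertices visited infinitely often by `ρ`. -/
def InfSet (ρ : ℕ → V) : Set V := {v | ∀ N, ∃ n, N ≤ n ∧ ρ n = v}

/-- `s` is a winning strategy for player 0 from `v0` in the connectivity game on `G`:
along every consistent history player 0's moves are legal and the play is never stuck
(so all maximal consistent plays are infinite), and every infinite consistent play
visits every vertex of `G` infinitely often. -/
def WinsConnFrom (G : ConnGame V) (s : List V → V) (v0 : V) : Prop :=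
  (∀ h v, Hist G s v0 (h ++ [v]) →
      (v ∈ G.V0 → (v, s (h ++ [v])) ∈ G.E) ∧ (v ∈ G.V1 → ∃ u, (v, u) ∈ G.E)) ∧
    ∀ ρ : ℕ → V, InfPlay G s v0 ρ → InfSet ρ = G.verts

/-- `G` is forced-connected: player 0 wins the connectivity game from every vertex. -/
def ForcedConnected (G : ConnGame V) : Prop :=
  ∀ v ∈ G.verts, ∃ s : List V → V, WinsConnFrom G s v

/-- The simplified derivative sequence `G'_k`, where the choice function `c`
selects one outgoing edge per forced vertex: `deriv' G c k = (E'_k, U_k, F_k)`. -/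
def deriv' (G : ConnGame V) (c : V → V) : ℕ → Set (V × V) × Set V × Set V
  | 0 => ({e | e ∈ G.E ∧ e.1 ∈ G.V0}, G.V1, ∅)
  | k + 1 =>
    let p := deriv' G c k
    let F : Set V := ⋃ S ∈ SCCs G.verts p.1, Force G.E p.2.1 S
    (p.1 ∪ {e | ∃ f ∈ F, e = (f, c f)}, p.2.1 \ F, F)

/-- The edge set `E'_k` of the simplified derivative `G'_k`. -/
def Ek' (G : ConnGame V) (c : V → V) (k : ℕ) : Set (V × V) := (deriv' G c k).1

/-- The set `F_k` of the simplified derivative sequence. -/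
def Fk' (G : ConnGame V) (c : V → V) (k : ℕ) : Set V := (deriv' G c k).2.2

/-- The stabilization point of the simplified derivative sequence. -/
noncomputable def stab' (G : ConnGame V) (c : V → V) : ℕ :=
  sInf {k | 0 < k ∧ Fk' G c k = ∅}

/-- The reduced derivative sequence `G''_k` on the vertex set `V0`:
`deriv'' G c k = (E''_k, U''_k, F''_k)`. -/
def deriv'' (G : ConnGame V) (c : V → V) : ℕ → Set (V × V) × Set V × Set V
  | 0 => (∅, G.V1, ∅)
  | k + 1 =>
    let p := deriv'' G c k
    let F : Set V := ⋃ S ∈ SCCs G.V0 p.1, Force G.E p.2.1 S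
    (p.1 ∪ {e | ∃ f ∈ F, (e.1, f) ∈ G.E ∧ e.2 = c f}, p.2.1 \ F, F)

/-- The edge set `E''_k` of the reduced derivative `G''_k`. -/
def Ek'' (G : ConnGame V) (c : V → V) (k : ℕ) : Set (V × V) := (deriv'' G c k).1

/-- The set `F''_k` of the reduced derivative sequence. -/
def Fk'' (G : ConnGame V) (c : V → V) (k : ℕ) : Set V := (deriv'' G c k).2.2

/-- The stabilization point of the reduced derivative sequence. -/
noncomputable def stab'' (G : ConnGame V) (c : V → V) : ℕ :=
  sInf {k | 0 < k ∧ Fk'' G c k = ∅}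

/-- The derivation forest: `forest G k = (N_k, Son_k)`. -/
def forest (G : ConnGame V) : ℕ → Set (Set V) × Set (Set V × Set V)
  | 0 => ({S | ∃ v ∈ G.verts, S = {v}}, ∅)
  | k + 1 =>
    let p := forest G k
    let C : Set (Set V) := SCCs G.verts (Ek G (k + 1)) \ p.1
    (p.1 ∪ C, p.2 ∪ {q | q.1 ∈ C ∧ q.2 ∈ SCCs G.verts (Ek G k) ∧ q.2 ⊂ q.1})

/-- The node set `N` of the derivation forest `Γ(G) = Γ_s(G)`. -/
noncomputable def forestN (G : ConnGame V) : Set (Set V) := (forest G (stab G)).1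

/-- The son relation `Son` of the derivation forest `Γ(G) = Γ_s(G)`. -/
noncomputable def forestSon (G : ConnGame V) : Set (Set V × Set V) :=
  (forest G (stab G)).2


lemma Ek_subset (G : ConnGame V) (k : ℕ) : Ek G k ⊆ G.E := by
  induction k with
  | zero => intro e he; exact he.1
  | succ k ih =>
      intro e he
      rcases he with h | h
      · exact ih h
      · exact h.1

lemma Ek_succ (G : ConnGame V) (k : ℕ) :
    Ek G (k + 1) = Ek G k ∪
      {e | e ∈ G.E ∧ e.1 ∈ ⋃ S ∈ SCCs G.verts (Ek G k), Force G.E (Uk G k) S} := rfl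

lemma Ek_mono (G : ConnGame V) {j k : ℕ} (h : j ≤ k) : Ek G j ⊆ Ek G k := by
  induction h with
  | refl => exact le_refl _
  | step _ ih => exact ih.trans (by rw [Ek_succ]; exact Set.subset_union_left)

lemma scc_reach {W : Set V} {E : Set (V × V)} {S : Set V} (hS : S ∈ SCCs W E)
    {a b : V} (ha : a ∈ S) (hb : b ∈ S) : Reach E a b := by
  obtain ⟨v, _, rfl⟩ := hS
  exact ha.2.2.trans hb.2.1

lemma scc_sub_verts {W : Set V} {E : Set (V × V)} {S : Set V} (hS : S ∈ SCCs W E) :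
    S ⊆ W := by
  obtain ⟨v, _, rfl⟩ := hS
  exact fun u hu => hu.1

lemma V1_edge_forced (G : ConnGame V) (hdisj : Disjoint G.V0 G.V1)
    {k : ℕ} {w u : V} (hw : w ∈ G.V1) (he : (w, u) ∈ Ek G k) :
    ∃ j, j < k ∧ ∃ S' ∈ SCCs G.verts (Ek G j), w ∈ Force G.E (Uk G j) S' := by
  induction k with
  | zero => exact absurd hw (Set.disjoint_left.mp hdisj he.2)
  | succ k ih =>
      rw [Ek_succ] at he
      rcases he with h | h
      · obtain ⟨j, hj, hrest⟩ := ih h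
        exact ⟨j, hj.trans (Nat.lt_succ_self k), hrest⟩
      · obtain ⟨S', hS', hwF⟩ := Set.mem_iUnion₂.mp h.2
        exact ⟨k, Nat.lt_succ_self k, S', hS', hwF⟩

lemma reach_head {E : Set (V × V)} {a b : V} (h : Reach E a b) (hne : a ≠ b) :
    ∃ c, (a, c) ∈ E ∧ Reach E c b := by
  rcases Relation.ReflTransGen.cases_head h with rfl | ⟨c, hc, hcb⟩
  · exact absurd rfl hne
  · exact ⟨c, hc, hcb⟩

lemma reach_within_scc {W : Set V} {E' : Set (V × V)}
    (hverts : ∀ x y : V, (x, y) ∈ E' → y ∈ W)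
    {v b : V} (hbv : Reach E' b v) :
    ∀ a, Reach E' a b → a ∈ W → Reach E' v a →
      ReachWithin E' {u | u ∈ W ∧ Reach E' v u ∧ Reach E' u v} a b := by
  intro a hr
  induction hr using Relation.ReflTransGen.head_induction_on with
  | refl => intro _ _; exact Relation.ReflTransGen.refl
  | @head a c hac hcb ih =>
      intro haW hva
      have hcW : c ∈ W := hverts a c hac
      have hvc : Reach E' v c := hva.tail hac
      have hcv : Reach E' c v := hcb.trans hbv
      have hav : Reach E' a v := (Relation.ReflTransGen.head hac hcb).trans hbv
      exact Relation.ReflTransGen.head ⟨hac, ⟨haW, hva, hav⟩, ⟨hcW, hvc, hcv⟩⟩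
        (ih hcW hvc)

/-- For every `k ≥ 0`, every strongly connected component of the
`k`-th derivative `G_k` is a forced trap in `G_k` (w.r.t. the edge set `E_k`). -/
theorem stmt2 [Fintype V] (G : ConnGame V)
    (hdisj : Disjoint G.V0 G.V1)
    (hEsub : G.E ⊆ (G.V0 ×ˢ G.V1) ∪ (G.V1 ×ˢ G.V0)) :
    ∀ k : ℕ, ∀ S ∈ SCCs G.verts (Ek G k), IsFT G.V1 (Ek G k) S := by
  intro k S hS
  obtain ⟨v, hv, rfl⟩ := hS
  set X : Set V := {u | u ∈ G.verts ∧ Reach (Ek G k) v u ∧ Reach (Ek G k) u v}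
    with hXdef
  have hvX : v ∈ X := ⟨hv, Relation.ReflTransGen.refl, Relation.ReflTransGen.refl⟩
  rcases X.subsingleton_or_nontrivial with hss | hnt
  · exact Or.inl ⟨v, hss.eq_singleton_of_mem hvX⟩
  right
  have hverts : ∀ x y : V, (x, y) ∈ Ek G k → y ∈ G.verts := by
    intro x y hxy
    rcases hEsub (Ek_subset G k hxy) with h | h
    · exact Or.inr h.2
    · exact Or.inl h.2
  have hclose : ∀ w ∈ X ∩ G.V1, ∀ u, (w, u) ∈ Ek G k → u ∈ X := by
    rintro w ⟨hwX, hwV1⟩ u hwu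
    obtain ⟨j, hjk, S', hS', hF⟩ := V1_edge_forced G hdisj hwV1 hwu
    have hEall : ∀ u', (w, u') ∈ G.E → u' ∈ S' := hF.2
    have huS' : u ∈ S' := hEall u (Ek_subset G k hwu)
    obtain ⟨x, hxX, hxw⟩ := hnt.exists_ne w
    have hwx : Reach (Ek G k) w x := hwX.2.2.trans hxX.2.1
    obtain ⟨c, hwc, hcx⟩ := reach_head hwx (Ne.symm hxw)
    have hcS' : c ∈ S' := hEall c (Ek_subset G k hwc)
    have hcw : Reach (Ek G k) c w := hcx.trans (hxX.2.2.trans hwX.2.1)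
    have huc : Reach (Ek G k) u c :=
      Relation.ReflTransGen.mono (fun a b hab => Ek_mono G hjk.le hab) u c (scc_reach hS' huS' hcS')
    refine ⟨scc_sub_verts hS' huS', hwX.2.1.tail hwu, ?_⟩
    exact (huc.trans hcw).trans hwX.2.2
  refine ⟨hnt, hclose, ?_⟩
  intro a ha b hb
  exact reach_within_scc hverts hb.2.2 a (ha.2.2.trans hb.2.1) ha.1 ha.2.1
end Games
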